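/- Let f₁, …, f_n : ℝ^d → ℝ be differentiable and each L-smooth, and let f(x) = (1/n)∑_{j=1}^n f_j(x). Fix x, x̃ ∈ ℝ^d and let j₁, …, j_B be independent random indices, each uniformly distributed on {1,…,n}. Define the variance-reduced gradient estimator g = (1/B)∑_{a=1}^B [∇f_{j_a}(x) − ∇f_{j_a}(x̃)] + ∇f(x̃). Then E‖g − ∇f(x)‖² ≤ (L²/B)·‖x − x̃‖². -/

import Mathlib

open MeasureTheory ProbabilityTheory
open scoped ProbabilityTheory BigOperators ENNReal

lemma integrable_comp_fin {Ω α : Type*} [MeasureSpace Ω] [IsProbabilityMeasure (ℙ : Measure Ω)]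
    [Finite α] [MeasurableSpace α] [MeasurableSingletonClass α]
    (X : Ω → α) (hX : Measurable X) (φ : α → ℝ) : Integrable (fun ω => φ (X ω)) ℙ := by
  have : IsProbabilityMeasure (Measure.map X ℙ) := Measure.isProbabilityMeasure_map hX.aemeasurable
  have hφ : Measurable φ := Measurable.of_discrete
  exact (integrable_map_measure hφ.aestronglyMeasurable hX.aemeasurable).mp .of_finite

lemma integral_comp_fin {Ω α : Type*} [MeasureSpace Ω] [IsProbabilityMeasure (ℙ : Measure Ω)]
    [Fintype α] [MeasurableSpace α] [MeasurableSingletonClass α]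
    (X : Ω → α) (hX : Measurable X) (φ : α → ℝ) :
    ∫ ω, φ (X ω) = ∑ k, (ℙ {ω | X ω = k}).toReal * φ k := by
  have : IsProbabilityMeasure (Measure.map X ℙ) := Measure.isProbabilityMeasure_map hX.aemeasurable
  have hφ : Measurable φ := Measurable.of_discrete
  rw [← integral_map hX.aemeasurable hφ.aestronglyMeasurable, integral_fintype .of_finite]
  refine Finset.sum_congr rfl fun k _ => ?_
  rw [Measure.real, Measure.map_apply hX (measurableSet_singleton k), smul_eq_mul]
  rfl

theorem svrg_minibatch_variance_bound
    {Ω : Type*} [MeasureSpace Ω] [IsProbabilityMeasure (ℙ : Measure Ω)]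
    {d n B : ℕ} (hn : 0 < n) (hB : 0 < B) (L : ℝ)
    (f : Fin n → EuclideanSpace ℝ (Fin d) → ℝ)
    (g : Fin n → EuclideanSpace ℝ (Fin d) → EuclideanSpace ℝ (Fin d))
    (hgrad : ∀ j x, HasGradientAt (f j) (g j x) x)
    (hsmooth : ∀ j x y, ‖g j x - g j y‖ ≤ L * ‖x - y‖)
    (gF : EuclideanSpace ℝ (Fin d) → EuclideanSpace ℝ (Fin d))
    (hgF : ∀ x, HasGradientAt (fun y => (n : ℝ)⁻¹ * ∑ j, f j y) (gF x) x)
    (x xt : EuclideanSpace ℝ (Fin d))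
    (J : Fin B → Ω → Fin n) (hJmeas : ∀ a, Measurable (J a))
    (hJindep : iIndepFun J ℙ)
    (hJunif : ∀ a k, ℙ {ω | J a ω = k} = (n : ℝ≥0∞)⁻¹) :
    ∫ ω, ‖(B : ℝ)⁻¹ • ∑ a, (g (J a ω) x - g (J a ω) xt) + gF xt - gF x‖ ^ 2 ≤
      L ^ 2 / (B : ℝ) * ‖x - xt‖ ^ 2 := by
  classical
  have hnne : (n : ℝ) ≠ 0 := Nat.cast_ne_zero.mpr hn.ne'
  have hBne : (B : ℝ) ≠ 0 := Nat.cast_ne_zero.mpr hB.ne'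
  -- gF is the average of the g j
  have hgsum : ∀ y, gF y = (n : ℝ)⁻¹ • ∑ j, g j y := by
    intro y
    have key : HasGradientAt (fun z => (n:ℝ)⁻¹ * ∑ j, f j z) ((n:ℝ)⁻¹ • ∑ j, g j y) y := by
      rw [hasGradientAt_iff_hasFDerivAt]
      have h1 : HasFDerivAt (fun z => ∑ j, f j z)
          (∑ j, (InnerProductSpace.toDual ℝ _) (g j y)) y :=
        HasFDerivAt.fun_sum fun j _ => (hgrad j y).hasFDerivAt
      have h2 := h1.const_mul ((n:ℝ)⁻¹)
      convert h2 using 1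
      · rfl
      · simp [_root_.map_smul, _root_.map_sum]
    exact (hgF y).unique key
  obtain ⟨z, hzdef⟩ : ∃ z : Fin n → EuclideanSpace ℝ (Fin d),
      z = fun j => g j x - g j xt := ⟨_, rfl⟩
  obtain ⟨c, hcdef⟩ : ∃ c : EuclideanSpace ℝ (Fin d), c = gF x - gF xt := ⟨_, rfl⟩
  obtain ⟨v, hvdef⟩ : ∃ v : Fin n → EuclideanSpace ℝ (Fin d),
      v = fun j => z j - c := ⟨_, rfl⟩
  have hcz : (n : ℝ) • c = ∑ j, z j := by
    rw [hcdef, hgsum x, hgsum xt, ← smul_sub, ← Finset.sum_sub_distrib, smul_smul,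
      mul_inv_cancel₀ hnne, one_smul, hzdef]
  have hnc : (n:ℝ) • c = ∑ _j : Fin n, c := by
    rw [Finset.sum_const, Finset.card_univ, Fintype.card_fin, Nat.cast_smul_eq_nsmul ℝ]
  have hvsum : ∑ j, v j = 0 := by
    simp only [hvdef]
    rw [Finset.sum_sub_distrib, ← hnc, hcz, sub_self]
  -- rewrite the integrand
  have hrw : ∀ ω, ‖(B : ℝ)⁻¹ • ∑ a, (g (J a ω) x - g (J a ω) xt) + gF xt - gF x‖ ^ 2
      = ‖(B : ℝ)⁻¹ • ∑ a, v (J a ω)‖ ^ 2 := by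
    intro ω
    congr 1
    have hzJ : ∀ a, g (J a ω) x - g (J a ω) xt = z (J a ω) := fun a => by rw [hzdef]
    have hBc : (B:ℝ) • c = ∑ _a : Fin B, c := by
      rw [Finset.sum_const, Finset.card_univ, Fintype.card_fin, Nat.cast_smul_eq_nsmul ℝ]
    have h1 : ∑ a, v (J a ω) = (∑ a, z (J a ω)) - (B : ℝ) • c := by
      simp only [hvdef]
      rw [Finset.sum_sub_distrib, ← hBc]
    rw [h1, smul_sub, smul_smul, inv_mul_cancel₀ hBne, one_smul]
    simp only [hzJ]
    rw [hcdef]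
    abel
  have expand : ∀ ω, ‖(B : ℝ)⁻¹ • ∑ a, v (J a ω)‖ ^ 2
      = ((B:ℝ)⁻¹)^2 * ∑ a, ∑ b, (inner ℝ (v (J a ω)) (v (J b ω)) : ℝ) := by
    intro ω
    rw [norm_smul, mul_pow, Real.norm_eq_abs, sq_abs, ← real_inner_self_eq_norm_sq,
      sum_inner]
    congr 1
    exact Finset.sum_congr rfl fun a _ => inner_sum _ _ _
  have hprob : ∀ a (k : Fin n), (ℙ {ω | J a ω = k}).toReal = (n:ℝ)⁻¹ := by
    intro a k
    rw [hJunif a k, ENNReal.toReal_inv]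
    simp
  have hdiag : ∀ a, ∫ ω, (inner ℝ (v (J a ω)) (v (J a ω)) : ℝ) = (n:ℝ)⁻¹ * ∑ j, ‖v j‖^2 := by
    intro a
    calc ∫ ω, (inner ℝ (v (J a ω)) (v (J a ω)) : ℝ)
        = ∑ k, (ℙ {ω | J a ω = k}).toReal * (inner ℝ (v k) (v k) : ℝ) :=
          integral_comp_fin (J a) (hJmeas a) (fun k => (inner ℝ (v k) (v k) : ℝ))
      _ = (n:ℝ)⁻¹ * ∑ j, ‖v j‖^2 := by
          rw [Finset.mul_sum]
          refine Finset.sum_congr rfl fun j _ => ?_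
          rw [hprob]
          rw [real_inner_self_eq_norm_sq]
  have hoff : ∀ a b, a ≠ b → ∫ ω, (inner ℝ (v (J a ω)) (v (J b ω)) : ℝ) = 0 := by
    intro a b hab
    have hXm : Measurable (fun ω => (J a ω, J b ω)) := (hJmeas a).prodMk (hJmeas b)
    have hind : IndepFun (J a) (J b) ℙ := hJindep.indepFun hab
    have hp : ∀ p : Fin n × Fin n,
        (ℙ {ω | (J a ω, J b ω) = p}).toReal = (n:ℝ)⁻¹ * (n:ℝ)⁻¹ := by
      intro p
      have hset : {ω | (J a ω, J b ω) = p} = (J a ⁻¹' {p.1}) ∩ (J b ⁻¹' {p.2}) := by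
        ext ω; simp [Prod.ext_iff]
      rw [hset, hind.measure_inter_preimage_eq_mul _ _ (measurableSet_singleton _)
        (measurableSet_singleton _)]
      have e1 : J a ⁻¹' {p.1} = {ω | J a ω = p.1} := rfl
      have e2 : J b ⁻¹' {p.2} = {ω | J b ω = p.2} := rfl
      rw [e1, e2, hJunif, hJunif, ENNReal.toReal_mul, ENNReal.toReal_inv]
      simp
    calc ∫ ω, (inner ℝ (v (J a ω)) (v (J b ω)) : ℝ)
        = ∑ p : Fin n × Fin n,
            (ℙ {ω | (J a ω, J b ω) = p}).toReal * (inner ℝ (v p.1) (v p.2) : ℝ) :=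
          integral_comp_fin (fun ω => (J a ω, J b ω)) hXm
            (fun p => (inner ℝ (v p.1) (v p.2) : ℝ))
      _ = ((n:ℝ)⁻¹ * (n:ℝ)⁻¹) * ∑ p : Fin n × Fin n, (inner ℝ (v p.1) (v p.2) : ℝ) := by
          rw [Finset.mul_sum]
          exact Finset.sum_congr rfl fun p _ => by rw [hp]
      _ = ((n:ℝ)⁻¹ * (n:ℝ)⁻¹) * (inner ℝ (∑ j, v j) (∑ j, v j) : ℝ) := by
          congr 1
          rw [Fintype.sum_prod_type, sum_inner]
          exact Finset.sum_congr rfl fun j _ => by rw [inner_sum]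
      _ = 0 := by rw [hvsum, inner_zero_left, mul_zero]
  -- compute the integral
  have hint : ∫ ω, ‖(B : ℝ)⁻¹ • ∑ a, (g (J a ω) x - g (J a ω) xt) + gF xt - gF x‖ ^ 2
      = (B:ℝ)⁻¹ * ((n:ℝ)⁻¹ * ∑ j, ‖v j‖^2) := by
    have h1 : (fun ω => ‖(B : ℝ)⁻¹ • ∑ a, (g (J a ω) x - g (J a ω) xt) + gF xt - gF x‖ ^ 2)
        = fun ω => ((B:ℝ)⁻¹)^2 * ∑ a, ∑ b, (inner ℝ (v (J a ω)) (v (J b ω)) : ℝ) :=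
      funext fun ω => by rw [hrw ω, expand ω]
    have hib : ∀ a b : Fin B, Integrable (fun ω => (inner ℝ (v (J a ω)) (v (J b ω)) : ℝ)) ℙ :=
      fun a b => integrable_comp_fin (fun ω => (J a ω, J b ω))
        ((hJmeas a).prodMk (hJmeas b)) (fun p => (inner ℝ (v p.1) (v p.2) : ℝ))
    rw [h1, integral_const_mul,
      integral_finset_sum _ (fun a _ => integrable_finset_sum _ (fun b _ => hib a b))]
    have h2 : ∀ a : Fin B, ∫ ω, ∑ b, (inner ℝ (v (J a ω)) (v (J b ω)) : ℝ)
        = (n:ℝ)⁻¹ * ∑ j, ‖v j‖^2 := by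
      intro a
      rw [integral_finset_sum _ (fun b _ => hib a b),
        Finset.sum_eq_single_of_mem a (Finset.mem_univ a)
          (fun b _ hba => hoff a b (Ne.symm hba))]
      exact hdiag a
    rw [Finset.sum_congr rfl fun a _ => h2 a, Finset.sum_const, Finset.card_univ,
      Fintype.card_fin, nsmul_eq_mul]
    field_simp
  rw [hint]
  -- bound the sum
  have hvb : ∑ j, ‖v j‖^2 ≤ (n:ℝ) * (L * ‖x - xt‖)^2 := by
    have h1 : ∀ j, ‖v j‖^2 = ‖z j‖^2 - 2 * (inner ℝ (z j) c : ℝ) + ‖c‖^2 := fun j => by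
      rw [hvdef]; exact norm_sub_sq_real _ _
    have h2 : ∑ j, ‖v j‖^2 = (∑ j, ‖z j‖^2) - (n:ℝ) * ‖c‖^2 := by
      rw [Finset.sum_congr rfl fun j _ => h1 j, Finset.sum_add_distrib,
        Finset.sum_sub_distrib, Finset.sum_const, Finset.card_univ, Fintype.card_fin,
        nsmul_eq_mul, ← Finset.mul_sum, ← sum_inner, ← hcz, real_inner_smul_left,
        real_inner_self_eq_norm_sq]
      ring
    have h3 : (∑ j, ‖z j‖^2) ≤ ∑ j : Fin n, (L * ‖x - xt‖)^2 :=
      Finset.sum_le_sum fun j _ => by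
        rw [hzdef]
        exact pow_le_pow_left₀ (norm_nonneg _) (hsmooth j x xt) 2
    have h4 : (0:ℝ) ≤ (n:ℝ) * ‖c‖^2 := by positivity
    calc ∑ j, ‖v j‖^2 = (∑ j, ‖z j‖^2) - (n:ℝ) * ‖c‖^2 := h2
      _ ≤ ∑ j, ‖z j‖^2 := by linarith
      _ ≤ ∑ j : Fin n, (L * ‖x - xt‖)^2 := h3
      _ = (n:ℝ) * (L * ‖x - xt‖)^2 := by
          rw [Finset.sum_const, Finset.card_univ, Fintype.card_fin, nsmul_eq_mul]
  have hB0 : (0:ℝ) ≤ (B:ℝ)⁻¹ := by positivity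
  have hn0 : (0:ℝ) ≤ (n:ℝ)⁻¹ := by positivity
  calc (B:ℝ)⁻¹ * ((n:ℝ)⁻¹ * ∑ j, ‖v j‖^2)
      ≤ (B:ℝ)⁻¹ * ((n:ℝ)⁻¹ * ((n:ℝ) * (L * ‖x - xt‖)^2)) := by
        exact mul_le_mul_of_nonneg_left (mul_le_mul_of_nonneg_left hvb hn0) hB0
    _ = L ^ 2 / (B : ℝ) * ‖x - xt‖ ^ 2 := by field_simp
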